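/- arXiv:2404.10986 — 2 statements merged into one kernel-verified Lean document; each statement's English description precedes it below -/
import Mathlib

section
/- Let N ≥ 2 and let Δ : ℝ^N × ℝ → ℝ^N be a C² map, written componentwise Δ = (Δ₁, …, Δ_N). Assume that Δ_i(z, 0) = 0 for all z ∈ ℝ^N and all i = 1, …, N−1. Define M_i(z) = ∂Δ_i/∂ε(z, 0) for i = 1, …, N−1 and g(z) = Δ_N(z, 0). Suppose there exists z* ∈ ℝ^N with M_i(z*) = 0 for i = 1, …, N−1, g(z*) = 0, and the Jacobian determinant at z* of the map z ↦ (M₁(z), …, M_{N−1}(z), g(z)) is nonzero. Then there exist ε₀ > 0 and a C¹ curve ε ↦ z*(ε) defined for |ε| < ε₀ with z*(0) = z* and Δ(z*(ε), ε) = 0 for every |ε| < ε₀. (This is the non-degenerate case of the paper's main existence theorem, where g(z) = Ω(I₀)nT mod T and dΩ_I/dI(I₀*) ≠ 0.) -/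
set_option synthInstance.maxHeartbeats 400000
set_option maxHeartbeats 1000000

open MeasureTheory Metric Set

/-- If `f : E × ℝ → F` is `C¹`, then `x ↦ ∫ t in 0..1, f (x, t)` is `C¹`. -/
lemma contDiff_one_parametric_integral
    {E F : Type*} [NormedAddCommGroup E] [NormedSpace ℝ E] [ProperSpace E]
    [NormedAddCommGroup F] [NormedSpace ℝ F] [CompleteSpace F]
    {f : E × ℝ → F} (hf : ContDiff ℝ 1 f) :
    ContDiff ℝ 1 (fun x : E => ∫ t in (0:ℝ)..1, f (x, t)) := by
  set f' : E × ℝ → (E →L[ℝ] F) := fun p => (fderiv ℝ f p).comp (.inl ℝ E ℝ) with hf'def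
  have hf'cont : Continuous f' :=
    (hf.continuous_fderiv one_ne_zero).clm_comp continuous_const
  have hdiff : ∀ (x : E) (t : ℝ), HasFDerivAt (fun y => f (y, t)) (f' (x, t)) x := by
    intro x t
    exact ((hf.differentiable one_ne_zero (x, t)).hasFDerivAt).comp x
      (hasFDerivAt_prodMk_left x t)
  have key : ∀ x₀ : E, HasFDerivAt (fun x => ∫ t in (0:ℝ)..1, f (x, t))
      (∫ t in (0:ℝ)..1, f' (x₀, t)) x₀ := by
    intro x₀
    obtain ⟨C, hC⟩ :=
      ((isCompact_closedBall x₀ 1).prod isCompact_Icc).exists_bound_of_continuousOn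
        (hf'cont.continuousOn (s := closedBall x₀ 1 ×ˢ Icc (0:ℝ) 1))
    apply intervalIntegral.hasFDerivAt_integral_of_dominated_of_fderiv_le
      (F' := fun x t => f' (x, t)) (bound := fun _ => C) (ball_mem_nhds x₀ one_pos)
    · filter_upwards with x
      exact (hf.continuous.comp (Continuous.prodMk_right x)).aestronglyMeasurable
    · exact (hf.continuous.comp (Continuous.prodMk_right x₀)).intervalIntegrable 0 1
    · exact (hf'cont.comp (Continuous.prodMk_right x₀)).aestronglyMeasurable
    · filter_upwards with t ht x hx
      refine hC (x, t) ⟨ball_subset_closedBall hx, Ioc_subset_Icc_self ?_⟩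
      simpa [Set.uIoc_of_le (zero_le_one (α := ℝ))] using ht
    · exact intervalIntegrable_const
    · filter_upwards with t ht x hx
      exact hdiff x t
  rw [contDiff_one_iff_fderiv]
  refine ⟨fun x => (key x).differentiableAt, ?_⟩
  have heq : (fderiv ℝ fun x => ∫ t in (0:ℝ)..1, f (x, t))
      = fun x₀ => ∫ t in (0:ℝ)..1, f' (x₀, t) :=
    funext fun x₀ => (key x₀).fderiv
  rw [heq]
  exact intervalIntegral.continuous_parametric_intervalIntegral_of_continuous'
    (f := fun x t => f' (x, t)) hf'cont 0 1

/-- Non-degenerate case of the main existence theorem: the first `N-1`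
components of the displacement function vanish at `ε = 0`; if the map
`z ↦ (M₁(z), …, M_{N-1}(z), g(z))` (Melnikov components together with the
`ε⁰`-part `g` of the last component) has a nondegenerate zero `z*`, then zeros
of `Δ` persist as a C¹ curve `ε ↦ z*(ε)`. -/
theorem nondegenerate_melnikov_existence
    (N : ℕ) (hN : 2 ≤ N)
    (Δ : (Fin N → ℝ) → ℝ → (Fin N → ℝ))
    (hΔ : ContDiff ℝ 2 (fun p : (Fin N → ℝ) × ℝ => Δ p.1 p.2))
    (hΔ0 : ∀ z : Fin N → ℝ, ∀ i : Fin N, (i : ℕ) + 1 < N → Δ z 0 i = 0)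
    (zstar : Fin N → ℝ)
    (hM : ∀ i : Fin N, (i : ℕ) + 1 < N → deriv (fun ε => Δ zstar ε i) 0 = 0)
    (hg : Δ zstar 0 ⟨N - 1, by omega⟩ = 0)
    (hjac : LinearMap.det
        (fderiv ℝ
          (fun z : Fin N → ℝ => fun i : Fin N =>
            if (i : ℕ) + 1 < N then deriv (fun ε => Δ z ε i) 0 else Δ z 0 i)
          zstar).toLinearMap ≠ 0) :
    ∃ ε₀ > (0 : ℝ), ∃ zc : ℝ → (Fin N → ℝ),
      ContDiffOn ℝ 1 zc (Set.Ioo (-ε₀) ε₀) ∧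
      zc 0 = zstar ∧
      ∀ ε : ℝ, |ε| < ε₀ → Δ (zc ε) ε = 0 := by
  classical
  set D : ((Fin N → ℝ) × ℝ) → (Fin N → ℝ) := fun p =>
    fderiv ℝ (fun q : (Fin N → ℝ) × ℝ => Δ q.1 q.2) p ((0 : Fin N → ℝ), (1 : ℝ)) with hDdef
  have hDC : ContDiff ℝ 1 D := by
    rw [hDdef]
    exact (hΔ.fderiv_right (m := 1) (by norm_num)).clm_apply contDiff_const
  have hDcont : Continuous D := hDC.continuous
  -- componentwise derivative in ε
  have hderiv : ∀ (z : Fin N → ℝ) (s : ℝ), HasDerivAt (fun ε => Δ z ε) (D (z, s)) s := by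
    intro z s
    exact ((hΔ.differentiable two_ne_zero (z, s)).hasFDerivAt).comp_hasDerivAt s
      (HasDerivAt.prodMk (hasDerivAt_const s z) (hasDerivAt_id s))
  have hderivi : ∀ (z : Fin N → ℝ) (s : ℝ) (i : Fin N),
      HasDerivAt (fun ε => Δ z ε i) (D (z, s) i) s := by
    intro z s i
    exact hasDerivAt_pi.1 (hderiv z s) i
  -- Hadamard factorization
  have hkey : ∀ (z : Fin N → ℝ) (ε : ℝ) (i : Fin N), (i : ℕ) + 1 < N →
      Δ z ε i = ε * ∫ t in (0:ℝ)..1, D (z, t * ε) i := by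
    intro z ε i hi
    rcases eq_or_ne ε 0 with rfl | hε
    · simp [hΔ0 z i hi]
    · have hcont : Continuous fun s => D (z, s) i :=
        (continuous_apply i).comp (hDcont.comp (Continuous.prodMk_right z))
      have hftc : (∫ s in (0:ℝ)..ε, D (z, s) i) = Δ z ε i - Δ z 0 i :=
        intervalIntegral.integral_eq_sub_of_hasDerivAt
          (fun s _ => hderivi z s i) (hcont.intervalIntegrable 0 ε)
      have hsub : (∫ t in (0:ℝ)..1, D (z, t * ε) i)
          = ε⁻¹ • ∫ s in (0:ℝ)*ε..1*ε, D (z, s) i :=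
        intervalIntegral.integral_comp_mul_right (fun s => D (z, s) i) hε
      rw [hsub]
      simp only [zero_mul, one_mul, smul_eq_mul, hftc, hΔ0 z i hi, sub_zero]
      field_simp
  -- the C¹ extension G
  set G : ((Fin N → ℝ) × ℝ) → (Fin N → ℝ) := fun p i =>
    if (i : ℕ) + 1 < N then ∫ t in (0:ℝ)..1, D (p.1, t * p.2) i else Δ p.1 p.2 i
    with hGdef
  have hGC : ContDiff ℝ 1 G := by
    apply contDiff_pi.2
    intro i
    by_cases hi : (i : ℕ) + 1 < N
    · simp only [hGdef, if_pos hi]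
      have hg1 : ContDiff ℝ 1
          (fun q : ((Fin N → ℝ) × ℝ) × ℝ => D (q.1.1, q.2 * q.1.2)) :=
        hDC.comp ((contDiff_fst.comp contDiff_fst).prodMk
          (contDiff_snd.mul (contDiff_snd.comp contDiff_fst)))
      exact contDiff_one_parametric_integral (contDiff_pi.mp hg1 i)
    · simp only [hGdef, if_neg hi]
      exact contDiff_pi.mp (hΔ.of_le one_le_two) i
  -- value of G at ε = 0
  have hG0 : ∀ z : Fin N → ℝ, G (z, 0) = fun i : Fin N =>
      if (i : ℕ) + 1 < N then deriv (fun ε => Δ z ε i) 0 else Δ z 0 i := by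
    intro z
    funext i
    by_cases hi : (i : ℕ) + 1 < N
    · simp only [hGdef, if_pos hi, mul_zero, intervalIntegral.integral_const,
        sub_zero, one_smul]
      exact ((hderivi z 0 i).deriv).symm
    · simp only [hGdef, if_neg hi]
  have hGp0 : G (zstar, 0) = 0 := by
    funext i
    rw [hG0 zstar]
    by_cases hi : (i : ℕ) + 1 < N
    · simpa [hi] using hM i hi
    · have hieq : i = ⟨N - 1, by omega⟩ := Fin.ext (by have := i.isLt; simp; omega)
      simp only [if_neg hi, Pi.zero_apply]
      rw [hieq]
      exact hg
  -- the Jacobian hypothesis in terms of G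
  have hfun : (fun z : Fin N → ℝ => fun i : Fin N =>
      if (i : ℕ) + 1 < N then deriv (fun ε => Δ z ε i) 0 else Δ z 0 i)
      = fun z : Fin N → ℝ => G (z, 0) := funext fun z => (hG0 z).symm
  rw [hfun] at hjac
  have hA : HasFDerivAt G (fderiv ℝ G (zstar, 0)) (zstar, 0) :=
    (hGC.differentiable one_ne_zero _).hasFDerivAt
  set B : (Fin N → ℝ) →L[ℝ] (Fin N → ℝ) :=
    (fderiv ℝ G (zstar, 0)).comp (ContinuousLinearMap.inl ℝ (Fin N → ℝ) ℝ) with hBdef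
  have hB : HasFDerivAt (fun z : Fin N → ℝ => G (z, 0)) B zstar :=
    by have := hA.comp zstar (hasFDerivAt_prodMk_left (𝕜 := ℝ) zstar (0 : ℝ)); exact this
  rw [hB.fderiv] at hjac
  -- injectivity of B from det ≠ 0
  have hBinj : Function.Injective B := by
    have h1 : IsUnit (LinearMap.toMatrixAlgEquiv' (B.toLinearMap)) := by
      rw [Matrix.isUnit_iff_isUnit_det]
      refine isUnit_iff_ne_zero.2 ?_
      have hdm : Matrix.det (LinearMap.toMatrix' (B.toLinearMap))
          = LinearMap.det B.toLinearMap := LinearMap.det_toMatrix' _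
      have hsame : (LinearMap.toMatrixAlgEquiv' (B.toLinearMap))
          = LinearMap.toMatrix' (B.toLinearMap) := rfl
      rw [hsame, hdm]
      exact hjac
    have h2 : IsUnit B.toLinearMap := by
      have := h1.map LinearMap.toMatrixAlgEquiv'.symm
      simpa using this
    have h3 := (LinearMap.isUnit_iff_ker_eq_bot _).1 h2
    exact LinearMap.ker_eq_bot.1 h3
  -- the auxiliary map Ψ
  set Ψ : ((Fin N → ℝ) × ℝ) → ((Fin N → ℝ) × ℝ) := fun p => (G p, p.2) with hΨdef
  have hΨC : ContDiff ℝ 1 Ψ := hGC.prodMk contDiff_snd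
  set L : ((Fin N → ℝ) × ℝ) →L[ℝ] ((Fin N → ℝ) × ℝ) :=
    (fderiv ℝ G (zstar, 0)).prod (ContinuousLinearMap.snd ℝ (Fin N → ℝ) ℝ) with hLdef
  have hL : HasFDerivAt Ψ L (zstar, 0) := hA.prodMk hasFDerivAt_snd
  have hLker : LinearMap.ker L.toLinearMap = ⊥ := by
    apply LinearMap.ker_eq_bot'.2
    rintro ⟨v, s⟩ h
    have hs : s = 0 := by simpa [hLdef] using congrArg Prod.snd h
    subst hs
    have hv : B v = 0 := by simpa [hBdef, hLdef] using congrArg Prod.fst h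
    have hv0 : v = 0 := hBinj (by rw [hv, map_zero])
    simp [hv0]
  have hLinj : Function.Injective L.toLinearMap := LinearMap.ker_eq_bot.1 hLker
  set e : ((Fin N → ℝ) × ℝ) ≃L[ℝ] ((Fin N → ℝ) × ℝ) :=
    (LinearEquiv.ofInjectiveEndo L.toLinearMap hLinj).toContinuousLinearEquiv with hedef
  have hL' : HasFDerivAt Ψ (e : ((Fin N → ℝ) × ℝ) →L[ℝ] ((Fin N → ℝ) × ℝ)) (zstar, 0) := by
    have hce : (e : ((Fin N → ℝ) × ℝ) →L[ℝ] ((Fin N → ℝ) × ℝ)) = L :=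
      ContinuousLinearMap.ext fun x => rfl
    rw [hce]; exact hL
  -- local inverse
  have hCAt : ContDiffAt ℝ 1 Ψ (zstar, 0) := hΨC.contDiffAt
  set inv : ((Fin N → ℝ) × ℝ) → ((Fin N → ℝ) × ℝ) := hCAt.localInverse hL' one_ne_zero
    with hinvdef
  have hinvC : ContDiffAt ℝ 1 inv (Ψ (zstar, 0)) := hCAt.to_localInverse hL' one_ne_zero
  have hinvp : inv (Ψ (zstar, 0)) = (zstar, 0) :=
    hCAt.localInverse_apply_image hL' one_ne_zero
  have hright : ∀ᶠ y in nhds (Ψ (zstar, 0)), Ψ (inv y) = y :=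
    (hCAt.hasStrictFDerivAt' hL' one_ne_zero).eventually_right_inverse
  have hΨp0 : Ψ (zstar, 0) = ((0 : Fin N → ℝ), (0 : ℝ)) := by
    simp only [hΨdef, hGp0]
  obtain ⟨u, hu, hucd⟩ := hinvC.contDiffOn le_rfl (by simp)
  have hev : ∀ᶠ y in nhds (Ψ (zstar, 0)), Ψ (inv y) = y ∧ y ∈ u :=
    hright.and (Filter.eventually_of_mem hu fun y hy => hy)
  rw [hΨp0] at hev hinvp
  obtain ⟨r, hr0, hr⟩ := Metric.eventually_nhds_iff.1 hev
  have hmem : ∀ ε : ℝ, |ε| < r →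
      dist (((0 : Fin N → ℝ)), ε) (((0 : Fin N → ℝ)), (0 : ℝ)) < r := by
    intro ε hε
    simp only [Prod.dist_eq, Real.dist_eq, dist_self, sub_zero]
    exact max_lt hr0 hε
  refine ⟨r, hr0, fun ε => (inv ((0 : Fin N → ℝ), ε)).1, ?_, ?_, ?_⟩
  · -- smoothness of the curve
    apply ContDiff.comp_contDiffOn contDiff_fst
    apply ContDiffOn.comp hucd ((contDiff_const.prodMk contDiff_id).contDiffOn)
    intro ε hε
    exact (hr (hmem ε (abs_lt.2 ⟨hε.1, hε.2⟩))).2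
  · -- value at 0
    exact congrArg Prod.fst hinvp
  · -- the zeros
    intro ε hε
    have hy := (hr (hmem ε hε)).1
    have hG' : G (inv ((0 : Fin N → ℝ), ε)) = 0 := by
      have := congrArg Prod.fst hy
      simpa [hΨdef] using this
    have hp2 : (inv ((0 : Fin N → ℝ), ε)).2 = ε := by
      have := congrArg Prod.snd hy
      simpa [hΨdef] using this
    have hGe : G ((inv ((0 : Fin N → ℝ), ε)).1, ε) = 0 := by
      rw [show ((inv ((0 : Fin N → ℝ), ε)).1, ε) = inv ((0 : Fin N → ℝ), ε) from
        Prod.ext rfl hp2.symm]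
      exact hG'
    funext i
    by_cases hi : (i : ℕ) + 1 < N
    · have hint : (∫ t in (0:ℝ)..1, D ((inv ((0 : Fin N → ℝ), ε)).1, t * ε) i) = 0 := by
        have := congrFun hGe i
        simpa [hGdef, if_pos hi] using this
      rw [hkey _ ε i hi, hint, mul_zero]
      simp
    · have := congrFun hGe i
      simp only [hGdef, if_neg hi] at this
      simpa using this
end

section
/- Let a₁ > 0, a₂ < 0, a₃ > 0 and let x₁, x₂, x₃ : ℝ → ℝ be differentiable functions satisfying the generalized Euler system x₁′(t) = a₁ x₂(t) x₃(t), x₂′(t) = a₂ x₁(t) x₃(t), x₃′(t) = a₃ x₁(t) x₂(t) for all t ∈ ℝ. Set h₁⁰ = a₂ x₃(0)² − a₃ x₂(0)² and h₃⁰ = a₁ x₂(0)² − a₂ x₁(0)². Then for all t ∈ ℝ: (−a₂)·x₁(t)² ≤ h₃⁰, a₁·x₂(t)² ≤ h₃⁰, and (−a₂)·x₃(t)² ≤ −h₁⁰. In particular, every solution of the generalized Euler system with a₁a₂a₃ < 0 (arranged so that a₁ > 0, a₂ < 0, a₃ > 0) is bounded. -/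
/-- Boundedness of solutions of the generalized Euler system with
`a₁ > 0, a₂ < 0, a₃ > 0`: the first integrals `h₃` and `−h₁` dominate the
squares of the coordinates along every solution. -/
theorem generalized_euler_bounded_solutions
    (a₁ a₂ a₃ : ℝ) (ha₁ : 0 < a₁) (ha₂ : a₂ < 0) (ha₃ : 0 < a₃)
    (x₁ x₂ x₃ : ℝ → ℝ)
    (hx₁ : ∀ t : ℝ, HasDerivAt x₁ (a₁ * x₂ t * x₃ t) t)
    (hx₂ : ∀ t : ℝ, HasDerivAt x₂ (a₂ * x₁ t * x₃ t) t)
    (hx₃ : ∀ t : ℝ, HasDerivAt x₃ (a₃ * x₁ t * x₂ t) t) :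
    ∀ t : ℝ,
      (-a₂) * x₁ t ^ 2 ≤ a₁ * x₂ 0 ^ 2 - a₂ * x₁ 0 ^ 2 ∧
      a₁ * x₂ t ^ 2 ≤ a₁ * x₂ 0 ^ 2 - a₂ * x₁ 0 ^ 2 ∧
      (-a₂) * x₃ t ^ 2 ≤ -(a₂ * x₃ 0 ^ 2 - a₃ * x₂ 0 ^ 2) := by
  have h3 : ∀ t : ℝ, a₁ * x₂ t ^ 2 - a₂ * x₁ t ^ 2 = a₁ * x₂ 0 ^ 2 - a₂ * x₁ 0 ^ 2 := by
    have key : ∀ t : ℝ,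
        HasDerivAt (fun t => a₁ * x₂ t ^ 2 - a₂ * x₁ t ^ 2) 0 t := by
      intro t
      have h := (((hx₂ t).pow 2).const_mul a₁).sub (((hx₁ t).pow 2).const_mul a₂)
      convert h using 1
      case e'_9 => ring
      all_goals rfl
    intro t
    have := is_const_of_deriv_eq_zero
      (f := fun t => a₁ * x₂ t ^ 2 - a₂ * x₁ t ^ 2)
      (fun t => (key t).differentiableAt)
      (fun t => (key t).deriv) t 0
    simpa using this
  have h1 : ∀ t : ℝ, a₂ * x₃ t ^ 2 - a₃ * x₂ t ^ 2 = a₂ * x₃ 0 ^ 2 - a₃ * x₂ 0 ^ 2 := by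
    have key : ∀ t : ℝ,
        HasDerivAt (fun t => a₂ * x₃ t ^ 2 - a₃ * x₂ t ^ 2) 0 t := by
      intro t
      have h := (((hx₃ t).pow 2).const_mul a₂).sub (((hx₂ t).pow 2).const_mul a₃)
      convert h using 1
      case e'_9 => ring
      all_goals rfl
    intro t
    have := is_const_of_deriv_eq_zero
      (f := fun t => a₂ * x₃ t ^ 2 - a₃ * x₂ t ^ 2)
      (fun t => (key t).differentiableAt)
      (fun t => (key t).deriv) t 0
    simpa using this
  intro t
  have e3 := h3 t
  have e1 := h1 t
  have p1 : 0 ≤ a₁ * x₂ t ^ 2 := by positivity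
  have p2 : 0 ≤ (-a₂) * x₁ t ^ 2 := by
    have : 0 < -a₂ := by linarith
    positivity
  have p3 : 0 ≤ a₃ * x₂ t ^ 2 := by positivity
  refine ⟨by linarith, by linarith, by linarith⟩
end
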